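/- Let d ≥ 1 and 0 < Δ < 1/4. Say a point z ∈ [0,1]^d lies in a corner cube of side 2Δ if there is a vertex v ∈ {0,1}^d with |z_k − v_k| ≤ 2Δ for every coordinate k. If x, y ∈ [0,1]^d and neither x nor y lies in any of the 2^d corner cubes of side 2Δ, then ‖x − y‖₂ ≤ √(d − 1 + (1 − 4Δ)²). -/

import Mathlib

open MeasureTheory Real

noncomputable section

/-- The uniform probability measure on the unit cube `[0,1]^d`. -/
def cubeMeasure (d : ℕ) : Measure (Fin d → ℝ) :=
  Measure.pi fun _ => volume.restrict (Set.Icc (0 : ℝ) 1)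

/-- The joint law of `n` i.i.d. points, each uniform on `[0,1]^d`. -/
def sampleMeasure (d n : ℕ) : Measure (Fin n → Fin d → ℝ) :=
  Measure.pi fun _ => cubeMeasure d

/-- Euclidean distance on `Fin d → ℝ`. -/
def eDist {d : ℕ} (x y : Fin d → ℝ) : ℝ :=
  Real.sqrt (∑ k, (x k - y k) ^ 2)

lemma eDist_comm {d : ℕ} (x y : Fin d → ℝ) : eDist x y = eDist y x := by
  unfold eDist
  congr 1
  exact Finset.sum_congr rfl fun k _ => by ring

/-- The geometric graph on the points `x 0, …, x (n-1)` with radius `r`: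
distinct `i`, `j` are adjacent iff the Euclidean distance of `x i` and `x j` is at most `r`. -/
def geomGraph {d n : ℕ} (x : Fin n → Fin d → ℝ) (r : ℝ) : SimpleGraph (Fin n) where
  Adj i j := i ≠ j ∧ eDist (x i) (x j) ≤ r
  symm := ⟨fun i j h => ⟨h.1.symm, by rw [eDist_comm]; exact h.2⟩⟩
  loopless := ⟨fun i h => h.1 rfl⟩

/-- A graph property (on labelled vertex sets `Fin m`) is closed under isomorphism. -/
def IsoClosed (A : ∀ m, SimpleGraph (Fin m) → Prop) : Prop :=
  ∀ m, ∀ G G' : SimpleGraph (Fin m), Nonempty (G ≃g G') → (A m G ↔ A m G')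

/-- A graph property is increasing: preserved by adding edges. -/
def IncreasingProp (A : ∀ m, SimpleGraph (Fin m) → Prop) : Prop :=
  ∀ m, ∀ G G' : SimpleGraph (Fin m), G ≤ G' → A m G → A m G'

/-- The probability that a random geometric graph on `n` uniform points in `[0,1]^d`
with radius `r` satisfies the property `A`. -/
def geomProb (d n : ℕ) (A : ∀ m, SimpleGraph (Fin m) → Prop) (r : ℝ) : ENNReal :=
  sampleMeasure d n {x | A n (geomGraph x r)}

/-- Threshold radius `r_A(n, ε)`. -/
def thresholdRadius (d n : ℕ) (A : ∀ m, SimpleGraph (Fin m) → Prop) (ε : ℝ) : ℝ :=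
  sInf {r : ℝ | 0 < r ∧ ENNReal.ofReal ε ≤ geomProb d n A r}

/-- Threshold width `δ_A(n, ε) = r_A(n, 1-ε) - r_A(n, ε)`. -/
def thresholdWidth (d n : ℕ) (A : ∀ m, SimpleGraph (Fin m) → Prop) (ε : ℝ) : ℝ :=
  thresholdRadius d n A (1 - ε) - thresholdRadius d n A ε

/-- The bottleneck matching weight between the point sets `x` and `y`. -/
def bottleneck {d n : ℕ} (x y : Fin n → Fin d → ℝ) : ℝ :=
  ⨅ φ : Equiv.Perm (Fin n), ⨆ i, eDist (x i) (y (φ i))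

/-- The joint law of two independent samples of `n` uniform points in `[0,1]^d`. -/
def pairMeasure (d n : ℕ) : Measure ((Fin n → Fin d → ℝ) × (Fin n → Fin d → ℝ)) :=
  (sampleMeasure d n).prod (sampleMeasure d n)

/-- `G` is isomorphic to a subgraph of `G'`. -/
def IsSubgraphIso {n m : ℕ} (G : SimpleGraph (Fin n)) (G' : SimpleGraph (Fin m)) : Prop :=
  ∃ f : Fin n ↪ Fin m, ∀ i j, G.Adj i j → G'.Adj (f i) (f j)

/-- The property: every vertex has degree at least a quarter of the number of vertices. -/
def minDegProp : ∀ m, SimpleGraph (Fin m) → Prop :=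
  fun m G => ∀ v, (m : ℝ) / 4 ≤ ((G.neighborSet v).ncard : ℝ)

/-- The property of being a complete graph. -/
def completeProp : ∀ m, SimpleGraph (Fin m) → Prop :=
  fun m G => ∀ i j : Fin m, i ≠ j → G.Adj i j

/-- `z ∈ [0,1]^d` lies in the corner cube of side `2Δ` at some vertex `v ∈ {0,1}^d`. -/
def inCornerCube (d : ℕ) (Δ : ℝ) (z : Fin d → ℝ) : Prop :=
  ∃ v : Fin d → Bool, ∀ k, |z k - (if v k then 1 else 0)| ≤ 2 * Δ

/-- two points of `[0,1]^d` avoiding all `2^d` corner cubes of side `2Δ`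
are at Euclidean distance at most `√(d - 1 + (1 - 4Δ)²)`. -/
theorem stmt16 (d : ℕ) (hd : 1 ≤ d) (Δ : ℝ) (h0 : 0 < Δ) (h1 : Δ < 1 / 4)
    (x y : Fin d → ℝ) (hx : ∀ k, x k ∈ Set.Icc (0 : ℝ) 1) (hy : ∀ k, y k ∈ Set.Icc (0 : ℝ) 1)
    (hxc : ¬ inCornerCube d Δ x) (hyc : ¬ inCornerCube d Δ y) :
    eDist x y ≤ Real.sqrt ((d : ℝ) - 1 + (1 - 4 * Δ) ^ 2) := by
  have key : ∀ z : Fin d → ℝ, (∀ k, z k ∈ Set.Icc (0:ℝ) 1) → ¬ inCornerCube d Δ z →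
      ∃ k, 2*Δ < z k ∧ z k < 1 - 2*Δ := by
    intro z hz hzc
    rw [inCornerCube] at hzc
    push_neg at hzc
    obtain ⟨k, hk⟩ := hzc (fun k => decide ((1:ℝ)/2 ≤ z k))
    refine ⟨k, ?_⟩
    have h := (hz k).1; have h' := (hz k).2
    by_cases hc : (1:ℝ)/2 ≤ z k
    · rw [if_pos (decide_eq_true_eq.mpr hc), abs_sub_comm,
        abs_of_nonneg (by linarith)] at hk
      constructor <;> linarith
    · rw [if_neg (by simpa using hc), sub_zero, abs_of_nonneg h] at hk
      have hk' := hk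
      constructor <;> [linarith; linarith [not_le.mp hc]]
  obtain ⟨k₁, hk₁l, hk₁r⟩ := key x hx hxc
  obtain ⟨k₂, hk₂l, hk₂r⟩ := key y hy hyc
  have hone : ∀ k, (x k - y k)^2 ≤ 1 := by
    intro k
    have h1 := (hx k).1; have h2 := (hx k).2
    have h3 := (hy k).1; have h4 := (hy k).2
    nlinarith
  have hsum : ∑ k, (x k - y k)^2 ≤ (d : ℝ) - 1 + (1 - 4*Δ)^2 := by
    by_cases heq : k₁ = k₂
    · subst heq
      have hterm : (x k₁ - y k₁)^2 ≤ (1 - 4*Δ)^2 := by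
        nlinarith
      have hrest : ∑ k ∈ Finset.univ.erase k₁, (x k - y k)^2 ≤ (d : ℝ) - 1 := by
        calc ∑ k ∈ Finset.univ.erase k₁, (x k - y k)^2
            ≤ ∑ _k ∈ Finset.univ.erase k₁, (1:ℝ) :=
              Finset.sum_le_sum fun k _ => hone k
          _ = (d : ℝ) - 1 := by
              rw [Finset.sum_const, Finset.card_erase_of_mem (Finset.mem_univ _)]
              simp [Nat.cast_sub hd]
      calc ∑ k, (x k - y k)^2
          = (x k₁ - y k₁)^2 + ∑ k ∈ Finset.univ.erase k₁, (x k - y k)^2 :=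
            (Finset.add_sum_erase _ _ (Finset.mem_univ k₁)).symm
        _ ≤ (1 - 4*Δ)^2 + ((d : ℝ) - 1) := add_le_add hterm hrest
        _ = (d : ℝ) - 1 + (1 - 4*Δ)^2 := by ring
    · have hd2 : 2 ≤ d := by
        have := Fintype.one_lt_card_iff.mpr ⟨k₁, k₂, heq⟩
        exact (by simpa using this : 1 < d)
      have ht1 : (x k₁ - y k₁)^2 ≤ (1 - 2*Δ)^2 := by
        have h3 := (hy k₁).1; have h4 := (hy k₁).2
        nlinarith
      have ht2 : (x k₂ - y k₂)^2 ≤ (1 - 2*Δ)^2 := by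
        have h1 := (hx k₂).1; have h2 := (hx k₂).2
        nlinarith
      have hmem : k₂ ∈ Finset.univ.erase k₁ := by
        simp [Ne.symm heq]
      have hrest : ∑ k ∈ (Finset.univ.erase k₁).erase k₂, (x k - y k)^2 ≤ (d : ℝ) - 2 := by
        calc ∑ k ∈ (Finset.univ.erase k₁).erase k₂, (x k - y k)^2
            ≤ ∑ _k ∈ (Finset.univ.erase k₁).erase k₂, (1:ℝ) :=
              Finset.sum_le_sum fun k _ => hone k
          _ = (d : ℝ) - 2 := by
              rw [Finset.sum_const, Finset.card_erase_of_mem hmem,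
                Finset.card_erase_of_mem (Finset.mem_univ _)]
              rw [Finset.card_univ, Fintype.card_fin, nsmul_eq_mul, mul_one,
                Nat.cast_sub (by omega), Nat.cast_sub hd]
              push_cast
              ring
      have hsplit : ∑ k, (x k - y k)^2
          = (x k₁ - y k₁)^2 + ((x k₂ - y k₂)^2 +
            ∑ k ∈ (Finset.univ.erase k₁).erase k₂, (x k - y k)^2) := by
        rw [← Finset.add_sum_erase _ _ (Finset.mem_univ k₁), ← Finset.add_sum_erase _ _ hmem]
      rw [hsplit]
      nlinarith
  unfold eDist
  exact Real.sqrt_le_sqrt hsum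

end
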